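/- Let xV, xF : ℤ × ℤ → (Fin 5 → ℝ) satisfy Q_M(xV(v), xF(f)) = 0 for every incident vertex–face pair, (x(d))₄ − (x(d))₃ ≠ 0 for every vertex and face d, and suppose that for every p ∈ ℤ × ℤ the four vectors xV(p), xV(p+(1,0)), xV(p+(0,1)), xV(p+(1,1)) span a submodule of ℝ⁵ of finrank at most 3, and likewise the four vectors xF(p), xF(p+(1,0)), xF(p+(0,1)), xF(p+(1,1)). Define bV(d) = ((xV(d))₀, (xV(d))₁, (xV(d))₂)/((xV(d))₄ − (xV(d))₃) and likewise bF. Then (bV, bF) is both a conjugate binet and an orthogonal binet, i.e. a principal binet. (Projections of conjugate polar binets with respect to the Möbius quadric are principal binets.) -/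

import Mathlib

open scoped InnerProductSpace

/-- A vertex `v` is incident to the face labeled `f` if `v` is one of its four corners. -/
def Incident (v f : ℤ × ℤ) : Prop :=
  v = f ∨ v = f + (1, 0) ∨ v = f + (0, 1) ∨ v = f + (1, 1)

/-- The Möbius form of signature `(++++-)` on `ℝ⁵`. -/
def QM (x y : Fin 5 → ℝ) : ℝ :=
  x 0 * y 0 + x 1 * y 1 + x 2 * y 2 + x 3 * y 3 - x 4 * y 4

/-- Stereographic projection `x ↦ (x₀, x₁, x₂)/(x₄ - x₃)`. -/
noncomputable def stereo (x : Fin 5 → ℝ) : EuclideanSpace ℝ (Fin 3) :=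
  (x 4 - x 3)⁻¹ • (WithLp.equiv 2 (Fin 3 → ℝ)).symm ![x 0, x 1, x 2]

/-- The set of pairwise differences of elements of a set. -/
def pairDiffs {E : Type*} [AddCommGroup E] (s : Set E) : Set E :=
  {x | ∃ y ∈ s, ∃ z ∈ s, x = y - z}

/-- A map `g : ℤ × ℤ → E` is a conjugate net if the four points of each quad are coplanar,
i.e. the submodule spanned by their pairwise differences has finrank at most `2`. -/
def IsConjugateNet {E : Type*} [AddCommGroup E] [Module ℝ E] (g : ℤ × ℤ → E) : Prop :=
  ∀ p : ℤ × ℤ, Module.finrank ℝ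
    (Submodule.span ℝ (pairDiffs
      ({g p, g (p + (1, 0)), g (p + (0, 1)), g (p + (1, 1))} : Set E))) ≤ 2

/- Auxiliary material -/

set_option linter.unnecessarySeqFocus false in
noncomputable def Tmap : (Fin 5 → ℝ) →ₗ[ℝ] (Fin 4 → ℝ) where
  toFun x := ![x 0, x 1, x 2, x 4 - x 3]
  map_add' x y := by funext i; fin_cases i <;> simp <;> ring
  map_smul' c x := by funext i; fin_cases i <;> simp <;> ring

noncomputable def Pmap : (Fin 4 → ℝ) →ₗ[ℝ] EuclideanSpace ℝ (Fin 3) where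
  toFun y := (WithLp.equiv 2 (Fin 3 → ℝ)).symm ![y 0, y 1, y 2]
  map_add' x y := by ext i; fin_cases i <;> simp
  map_smul' c x := by ext i; fin_cases i <;> simp

lemma stereo_eq (x : Fin 5 → ℝ) : stereo x = Pmap ((x 4 - x 3)⁻¹ • Tmap x) := by
  rw [map_smul]; unfold stereo Pmap Tmap; ext i; fin_cases i <;> simp [Tmap]

lemma pairDiffs_image {E F : Type*} [AddCommGroup E] [AddCommGroup F] [Module ℝ E] [Module ℝ F]
    (f : E →ₗ[ℝ] F) (s : Set E) : pairDiffs (f '' s) ⊆ f '' pairDiffs s := by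
  rintro _ ⟨_, ⟨y, hy, rfl⟩, _, ⟨z, hz, rfl⟩, rfl⟩
  exact ⟨y - z, ⟨y, hy, z, hz, rfl⟩, map_sub f y z⟩

lemma key (a b c d : Fin 5 → ℝ) (ha : a 4 - a 3 ≠ 0) (hb : b 4 - b 3 ≠ 0)
    (hc : c 4 - c 3 ≠ 0) (hd : d 4 - d 3 ≠ 0)
    (h : Module.finrank ℝ (Submodule.span ℝ ({a, b, c, d} : Set (Fin 5 → ℝ))) ≤ 3) :
    Module.finrank ℝ (Submodule.span ℝ (pairDiffs
      ({stereo a, stereo b, stereo c, stereo d} : Set (EuclideanSpace ℝ (Fin 3))))) ≤ 2 := by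
  classical
  set w : (Fin 5 → ℝ) → (Fin 4 → ℝ) := fun x => (x 4 - x 3)⁻¹ • Tmap x with hwdef
  have hw3 : ∀ x : Fin 5 → ℝ, x 4 - x 3 ≠ 0 → w x 3 = 1 := by
    intro x hx
    simp [hwdef, Tmap, inv_mul_cancel₀ hx]
  set W := (Submodule.span ℝ ({a, b, c, d} : Set (Fin 5 → ℝ))).map Tmap with hWdef
  have hWfr : Module.finrank ℝ W ≤ 3 := le_trans (Submodule.finrank_map_le _ _) h
  have hmem : ∀ x ∈ ({a, b, c, d} : Set (Fin 5 → ℝ)), w x ∈ W := fun x hx =>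
    Submodule.smul_mem _ _ (Submodule.mem_map_of_mem (Submodule.subset_span hx))
  set s : Set (Fin 4 → ℝ) := {w a, w b, w c, w d} with hsdef
  have hsW : ∀ y ∈ s, y ∈ W := by
    intro y hy
    rcases hy with rfl | rfl | rfl | rfl
    · exact hmem a (by simp)
    · exact hmem b (by simp)
    · exact hmem c (by simp)
    · exact hmem d (by simp)
  have hs3 : ∀ y ∈ s, y 3 = 1 := by
    intro y hy
    rcases hy with rfl | rfl | rfl | rfl
    exacts [hw3 a ha, hw3 b hb, hw3 c hc, hw3 d hd]
  set U := Submodule.span ℝ (pairDiffs s) with hUdef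
  have hUW : U ≤ W := Submodule.span_le.2 (by
    rintro _ ⟨y, hy, z, hz, rfl⟩
    exact W.sub_mem (hsW y hy) (hsW z hz))
  have hUker : U ≤ LinearMap.ker (LinearMap.proj (R := ℝ) (φ := fun _ : Fin 4 => ℝ) 3) := by
    refine Submodule.span_le.2 ?_
    rintro _ ⟨y, hy, z, hz, rfl⟩
    simp [LinearMap.mem_ker, hs3 y hy, hs3 z hz]
  have hwaU : w a ∉ U := by
    intro hmemU
    have := hUker hmemU
    simp only [LinearMap.mem_ker, LinearMap.proj_apply] at this
    rw [hw3 a ha] at this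
    norm_num at this
  have hlt : U < W := lt_of_le_of_ne hUW (by
    intro hEq
    exact hwaU (hEq ▸ hsW (w a) (by simp [hsdef])))
  have hUfr : Module.finrank ℝ U ≤ 2 := by
    have := Submodule.finrank_lt_finrank_of_lt hlt
    omega
  have himg : ({stereo a, stereo b, stereo c, stereo d} : Set (EuclideanSpace ℝ (Fin 3)))
      = Pmap '' s := by
    simp only [hsdef, Set.image_insert_eq, Set.image_singleton, stereo_eq, hwdef]
  rw [himg]
  calc Module.finrank ℝ (Submodule.span ℝ (pairDiffs (⇑Pmap '' s)))
      ≤ Module.finrank ℝ (Submodule.span ℝ (⇑Pmap '' pairDiffs s)) :=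
        Submodule.finrank_mono (Submodule.span_mono (pairDiffs_image Pmap s))
    _ = Module.finrank ℝ (U.map Pmap) := by rw [Submodule.span_image]
    _ ≤ Module.finrank ℝ U := Submodule.finrank_map_le _ _
    _ ≤ 2 := hUfr

lemma inner_stereo (x y : Fin 5 → ℝ) (hx : x 4 - x 3 ≠ 0) (hy : y 4 - y 3 ≠ 0)
    (h : QM x y = 0) :
    ⟪stereo x, stereo y⟫_ℝ
      = (x 4 + x 3) / (2 * (x 4 - x 3)) + (y 4 + y 3) / (2 * (y 4 - y 3)) := by
  unfold QM at h
  simp only [stereo, real_inner_smul_left, real_inner_smul_right]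
  have h2 : ⟪(WithLp.equiv 2 (Fin 3 → ℝ)).symm ![x 0, x 1, x 2],
      (WithLp.equiv 2 (Fin 3 → ℝ)).symm ![y 0, y 1, y 2]⟫_ℝ
      = x 0 * y 0 + x 1 * y 1 + x 2 * y 2 := by
    simp [PiLp.inner_apply, Fin.sum_univ_three, RCLike.inner_apply]
    ring
  rw [h2]
  have hq : x 0 * y 0 + x 1 * y 1 + x 2 * y 2 = x 4 * y 4 - x 3 * y 3 := by linarith
  rw [hq]; field_simp; ring

/-- The stereographic projection of a conjugate polar binet with respect to the Möbius quadric
is a principal binet (both conjugate and orthogonal). -/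
theorem stmt_3 (xV xF : ℤ × ℤ → Fin 5 → ℝ)
    (hpolar : ∀ v f : ℤ × ℤ, Incident v f → QM (xV v) (xF f) = 0)
    (hV : ∀ d : ℤ × ℤ, xV d 4 - xV d 3 ≠ 0) (hF : ∀ d : ℤ × ℤ, xF d 4 - xF d 3 ≠ 0)
    (hconjV : ∀ p : ℤ × ℤ, Module.finrank ℝ
      (Submodule.span ℝ
        ({xV p, xV (p + (1, 0)), xV (p + (0, 1)), xV (p + (1, 1))} : Set (Fin 5 → ℝ))) ≤ 3)
    (hconjF : ∀ p : ℤ × ℤ, Module.finrank ℝ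
      (Submodule.span ℝ
        ({xF p, xF (p + (1, 0)), xF (p + (0, 1)), xF (p + (1, 1))} : Set (Fin 5 → ℝ))) ≤ 3) :
    (IsConjugateNet (fun d => stereo (xV d)) ∧ IsConjugateNet (fun d => stereo (xF d))) ∧
    (∀ v : ℤ × ℤ,
      ⟪stereo (xV (v + (1, 0))) - stereo (xV v),
        stereo (xF v) - stereo (xF (v - (0, 1)))⟫_ℝ = 0 ∧
      ⟪stereo (xV (v + (0, 1))) - stereo (xV v),
        stereo (xF v) - stereo (xF (v - (1, 0)))⟫_ℝ = 0) := by
  refine ⟨⟨fun p => key _ _ _ _ (hV _) (hV _) (hV _) (hV _) (hconjV p),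
           fun p => key _ _ _ _ (hF _) (hF _) (hF _) (hF _) (hconjF p)⟩, fun v => ?_⟩
  have inc1 : Incident v v := Or.inl rfl
  have inc2 : Incident v (v - (0, 1)) := by
    right; right; left; rw [sub_add_cancel]
  have inc3 : Incident (v + (1, 0)) v := Or.inr (Or.inl rfl)
  have inc4 : Incident (v + (1, 0)) (v - (0, 1)) := by
    right; right; right
    obtain ⟨x, y⟩ := v
    simp [Prod.ext_iff]
  have inc5 : Incident v (v - (1, 0)) := by
    right; left; rw [sub_add_cancel]
  have inc6 : Incident (v + (0, 1)) v := Or.inr (Or.inr (Or.inl rfl))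
  have inc7 : Incident (v + (0, 1)) (v - (1, 0)) := by
    right; right; right
    obtain ⟨x, y⟩ := v
    simp [Prod.ext_iff]
  constructor
  · rw [inner_sub_left, inner_sub_right, inner_sub_right,
      inner_stereo _ _ (hV _) (hF _) (hpolar _ _ inc3),
      inner_stereo _ _ (hV _) (hF _) (hpolar _ _ inc4),
      inner_stereo _ _ (hV _) (hF _) (hpolar _ _ inc1),
      inner_stereo _ _ (hV _) (hF _) (hpolar _ _ inc2)]
    ring
  · rw [inner_sub_left, inner_sub_right, inner_sub_right,
      inner_stereo _ _ (hV _) (hF _) (hpolar _ _ inc6),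
      inner_stereo _ _ (hV _) (hF _) (hpolar _ _ inc7),
      inner_stereo _ _ (hV _) (hF _) (hpolar _ _ inc1),
      inner_stereo _ _ (hV _) (hF _) (hpolar _ _ inc5)]
    ring
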